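/- Let an I_ABC index coding problem with L receivers be given, with fitting pattern F_X (the L×rT pattern with a 1 at (t, dem(t)), X at the positions of S(t), and 0 elsewhere), and let G_ABC be its r×rT code matrix. Define the L×rT X-pattern B whose entry at (t, (m, j)) is 0 if F_X(t, (σ(m), j)) = 0, and X otherwise. Then there exists a 2L×r matrix D' such that D'·(G_ABC | C·G_ABC) fits the 2L×2rT block pattern (F_X B; B F_X); hence (G_ABC | C·G_ABC) is a scalar linear index code of length r for the extension problem. Moreover, if minrk(F_X) = r, then minrk((F_X B; B F_X)) = r, i.e., the extension is rank-invariant and (G_ABC | C·G_ABC) is an optimal code for it. -/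

import Mathlib

open Matrix

/-- A pattern entry: `some false` = 0, `some true` = 1, `none` = X. -/
abbrev PatEntry := Option Bool

/-- A matrix `M` fits a pattern `P` if `M` is `0` at every `0`-entry of `P`
and `1` at every `1`-entry of `P` (X-entries are unconstrained). -/
def Fits {L K 𝔽 : Type*} [Zero 𝔽] [One 𝔽]
    (P : Matrix L K PatEntry) (M : Matrix L K 𝔽) : Prop :=
  ∀ i j, (P i j = some false → M i j = 0) ∧ (P i j = some true → M i j = 1)

/-- The minrank of a pattern over the field `𝔽`. -/
noncomputable def minrk (𝔽 : Type*) [Field 𝔽] {L K : Type*} [Fintype K]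
    (P : Matrix L K PatEntry) : ℕ :=
  sInf {n | ∃ M : Matrix L K 𝔽, Fits P M ∧ M.rank = n}

/-- The three classes of message blocks in an `I_ABC` index coding problem. -/
inductive BlockType | A | B | C
deriving DecidableEq

/-- Auxiliary: sum of an indicator times a function. -/
lemma aux_sum_ite_mul {𝔽 ι : Type*} [Field 𝔽] [Fintype ι] [DecidableEq ι]
    (a : ι) (f : ι → 𝔽) :
    (∑ s, (if s = a then (1 : 𝔽) else 0) * f s) = f a := by
  simp [ite_mul]

/-- Auxiliary: sum of a function times an indicator. -/
lemma aux_sum_mul_ite {𝔽 ι : Type*} [Field 𝔽] [Fintype ι] [DecidableEq ι]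
    (a : ι) (f : ι → 𝔽) :
    (∑ s, f s * (if s = a then (1 : 𝔽) else 0)) = f a := by
  simp [mul_ite]

/-- The rank of the top-left block of a matrix is at most the rank of the matrix. -/
lemma aux_rank_submatrix_le {𝔽 : Type*} [Field 𝔽]
    {L1 L2 K1 K2 : Type*} [Fintype L1] [Fintype L2] [Fintype K1] [Fintype K2]
    [DecidableEq L1] [DecidableEq L2] [DecidableEq K1] [DecidableEq K2]
    (M : Matrix (L1 ⊕ L2) (K1 ⊕ K2) 𝔽) :
    (M.submatrix Sum.inl Sum.inl).rank ≤ M.rank := by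
  have h : M.submatrix Sum.inl (Sum.inl : K1 → K1 ⊕ K2) =
      (Matrix.of fun t (u : L1 ⊕ L2) => if u = Sum.inl t then (1 : 𝔽) else 0) * M *
      (Matrix.of fun (u : K1 ⊕ K2) p => if u = Sum.inl p then (1 : 𝔽) else 0) := by
    ext t p
    simp only [Matrix.mul_apply, Matrix.of_apply, Matrix.submatrix_apply]
    rw [aux_sum_mul_ite (Sum.inl p)
      (fun u => ∑ s, (if s = Sum.inl t then (1 : 𝔽) else 0) * M s u),
      aux_sum_ite_mul (Sum.inl t) (fun s => M s (Sum.inl p))]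
  rw [h]
  exact le_trans (Matrix.rank_mul_le_left _ _) (Matrix.rank_mul_le_right _ _)

/-- For an `I_ABC` index coding problem with fitting pattern `FX` and code matrix
`G_ABC`, and the X-pattern `B` obtained from `FX` by permuting the message index
within each block by `σ` (and X-ing the `1`s), there is a `2L × r` matrix `D'`
such that `D' * (G_ABC | C * G_ABC)` fits the block pattern `(FX B; B FX)`;
hence `(G_ABC | C * G_ABC)` is an index code of length `r` for the extension.
Moreover if `minrk FX = r` then `minrk (FX B; B FX) = r` (rank-invariance). -/
theorem GABC_two_order_extension {r T L : ℕ} {𝔽 : Type*} [Field 𝔽]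
    (σ : Equiv.Perm (Fin r)) (hσ : ∀ i, σ (σ i) = i)
    (C C1 : Matrix (Fin r) (Fin r) 𝔽)
    (hC : ∀ i j, C i j = if i = σ j then 1 else 0)
    (hC1 : ∀ i j, C1 i j = if i = j ∧ σ i = i then 1 else 0)
    (ty : Fin T → BlockType)
    (dem : Fin L → Fin r × Fin T) (S : Fin L → Finset (Fin r × Fin T))
    (hdem : ∀ t, dem t ∉ S t)
    (hA : ∀ t, ty (dem t).2 = BlockType.A →
      (∀ j, ty j = BlockType.A → j ≠ (dem t).2 → ((dem t).1, j) ∈ S t) ∧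
      (∀ j, ty j = BlockType.B → (σ (dem t).1, j) ∈ S t) ∧
      (∀ j, ty j = BlockType.C → ((dem t).1, j) ∈ S t) ∧
      (σ (dem t).1 ≠ (dem t).1 →
        ∀ j, ty j = BlockType.C → (σ (dem t).1, j) ∈ S t))
    (hB : ∀ t, ty (dem t).2 = BlockType.B →
      (∀ j, ty j = BlockType.B → j ≠ (dem t).2 → ((dem t).1, j) ∈ S t) ∧
      (∀ j, ty j = BlockType.A → (σ (dem t).1, j) ∈ S t) ∧
      (∀ j, ty j = BlockType.C → ((dem t).1, j) ∈ S t) ∧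
      (σ (dem t).1 ≠ (dem t).1 →
        ∀ j, ty j = BlockType.C → (σ (dem t).1, j) ∈ S t))
    (hCty : ∀ t, ty (dem t).2 = BlockType.C →
      (∀ j, ty j = BlockType.C → j ≠ (dem t).2 → ((dem t).1, j) ∈ S t) ∧
      (σ (dem t).1 ≠ (dem t).1 →
        (∀ j, ty j = BlockType.C → (σ (dem t).1, j) ∈ S t) ∧
        (((∀ j, ty j = BlockType.A → ((dem t).1, j) ∈ S t) ∧
            (∀ j, ty j = BlockType.B → (σ (dem t).1, j) ∈ S t)) ∨
          ((∀ j, ty j = BlockType.A → (σ (dem t).1, j) ∈ S t) ∧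
            (∀ j, ty j = BlockType.B → ((dem t).1, j) ∈ S t)))) ∧
      (σ (dem t).1 = (dem t).1 →
        (∀ j, ty j = BlockType.A → ((dem t).1, j) ∈ S t) ∧
        (∀ j, ty j = BlockType.B → (σ (dem t).1, j) ∈ S t)))
    (GABC : Matrix (Fin r) (Fin r × Fin T) 𝔽)
    (hG : ∀ (s m : Fin r) (j : Fin T), GABC s (m, j) =
      match ty j with
      | BlockType.A => (1 : Matrix (Fin r) (Fin r) 𝔽) s m
      | BlockType.B => C s m
      | BlockType.C => (1 + C - C1) s m)
    (FX : Matrix (Fin L) (Fin r × Fin T) PatEntry)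
    (hFX : ∀ t p, FX t p =
      if p = dem t then some true else if p ∈ S t then none else some false)
    (B : Matrix (Fin L) (Fin r × Fin T) PatEntry)
    (hBdef : ∀ t (m : Fin r) (j : Fin T), B t (m, j) =
      if FX t (σ m, j) = some false then some false else none) :
    (∃ D' : Matrix (Fin L ⊕ Fin L) (Fin r) 𝔽,
        Fits (Matrix.fromBlocks FX B B FX)
          (D' * Matrix.fromCols GABC (C * GABC))) ∧
    (minrk 𝔽 FX = r →
        minrk 𝔽 (Matrix.fromBlocks FX B B FX) = r) := by
    classical
  -- Entry formulas for `GABC`.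
  have hGA : ∀ (s m : Fin r) (j : Fin T), ty j = BlockType.A →
      GABC s (m, j) = if s = m then 1 else 0 := by
    intro s m j h; rw [hG, h]; exact Matrix.one_apply
  have hGB : ∀ (s m : Fin r) (j : Fin T), ty j = BlockType.B →
      GABC s (m, j) = if s = σ m then 1 else 0 := by
    intro s m j h; rw [hG, h]; exact hC s m
  have hGC : ∀ (s m : Fin r) (j : Fin T), ty j = BlockType.C →
      GABC s (m, j) = (if s = m then 1 else 0) + (if s = σ m then 1 else 0)
        - (if s = m ∧ σ s = s then 1 else 0) := by
    intro s m j h; rw [hG, h]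
    simp only [Matrix.sub_apply, Matrix.add_apply, Matrix.one_apply, hC, hC1]
  -- Symmetry: applying σ to the row equals applying σ to the in-block index.
  have hGsym : ∀ (s m : Fin r) (j : Fin T), GABC (σ s) (m, j) = GABC s (σ m, j) := by
    intro s m j
    have e1 : (σ s = m) ↔ (s = σ m) :=
      ⟨fun h => by rw [← h, hσ], fun h => by rw [h, hσ]⟩
    have e2 : (σ s = σ m) ↔ (s = m) := ⟨fun h => σ.injective h, fun h => by rw [h]⟩
    cases htj : ty j with
    | A =>
      rw [hGA _ _ _ htj, hGA _ _ _ htj, if_congr e1 rfl rfl]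
    | B =>
      rw [hGB _ _ _ htj, hGB _ _ _ htj, hσ m, if_congr e2 rfl rfl]
    | C =>
      rw [hGC _ _ _ htj, hGC _ _ _ htj, hσ s, hσ m]
      have e3 : (σ s = m ∧ s = σ s) ↔ (s = σ m ∧ σ s = s) := by
        constructor
        · rintro ⟨h1, h2⟩; exact ⟨e1.mp h1, h2.symm⟩
        · rintro ⟨h1, h2⟩; exact ⟨e1.mpr h1, h2.symm⟩
      rw [if_congr e1 rfl rfl, if_congr e2 rfl rfl, if_congr e3 rfl rfl]
  -- Choice of the decoding row for each receiver.
  have hρex : ∀ t, ∃ ρt : Fin r, GABC ρt (dem t) = 1 ∧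
      ∀ m j, GABC ρt (m, j) ≠ 0 → (m, j) = dem t ∨ (m, j) ∈ S t := by
    intro t
    set k := (dem t).1 with hk
    set i := (dem t).2 with hi
    have hdemt : dem t = (k, i) := rfl
    cases hty : ty i with
    | A =>
      obtain ⟨h1, h2, h3, h4⟩ := hA t hty
      refine ⟨k, by rw [hdemt, hGA _ _ _ hty, if_pos rfl], ?_⟩
      intro m j hne
      cases htj : ty j with
      | A =>
        rw [hGA _ _ _ htj] at hne
        have hm : k = m := by by_contra h; rw [if_neg h] at hne; exact hne rfl
        rw [← hm]
        by_cases hj : j = i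
        · left; rw [hj, hdemt]
        · right; exact h1 j htj hj
      | B =>
        rw [hGB _ _ _ htj] at hne
        have h : k = σ m := by by_contra h; rw [if_neg h] at hne; exact hne rfl
        have hm : m = σ k := by rw [h, hσ]
        right; rw [hm]; exact h2 j htj
      | C =>
        rw [hGC _ _ _ htj] at hne
        have hkm : k = m ∨ k = σ m := by
          by_contra hcon
          push_neg at hcon
          rw [if_neg hcon.1, if_neg hcon.2, if_neg (fun h => hcon.1 h.1)] at hne
          simp at hne
        rcases hkm with h | h
        · right; rw [← h]; exact h3 j htj
        · have hm : m = σ k := by rw [h, hσ]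
          by_cases hfix : σ k = k
          · right; rw [hm, hfix]; exact h3 j htj
          · right; rw [hm]; exact h4 hfix j htj
    | B =>
      obtain ⟨h1, h2, h3, h4⟩ := hB t hty
      refine ⟨σ k, by rw [hdemt, hGB _ _ _ hty, if_pos rfl], ?_⟩
      intro m j hne
      cases htj : ty j with
      | A =>
        rw [hGA _ _ _ htj] at hne
        have hm : σ k = m := by by_contra h; rw [if_neg h] at hne; exact hne rfl
        right; rw [← hm]; exact h2 j htj
      | B =>
        rw [hGB _ _ _ htj] at hne
        have h : σ k = σ m := by by_contra h; rw [if_neg h] at hne; exact hne rfl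
        have hm : k = m := σ.injective h
        rw [← hm]
        by_cases hj : j = i
        · left; rw [hj, hdemt]
        · right; exact h1 j htj hj
      | C =>
        rw [hGC _ _ _ htj] at hne
        have hkm : σ k = m ∨ σ k = σ m := by
          by_contra hcon
          push_neg at hcon
          rw [if_neg hcon.1, if_neg hcon.2, if_neg (fun h => hcon.1 h.1)] at hne
          simp at hne
        rcases hkm with h | h
        · by_cases hfix : σ k = k
          · right; rw [← h, hfix]; exact h3 j htj
          · right; rw [← h]; exact h4 hfix j htj
        · have hm : k = m := σ.injective h
          right; rw [← hm]; exact h3 j htj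
    | C =>
      obtain ⟨h1, h2, h3⟩ := hCty t hty
      by_cases hfix : σ k = k
      · obtain ⟨hA', hB'⟩ := h3 hfix
        refine ⟨k, ?_, ?_⟩
        · rw [hdemt, hGC _ _ _ hty, if_pos rfl, if_pos hfix.symm, if_pos ⟨rfl, hfix⟩]
          ring
        · intro m j hne
          cases htj : ty j with
          | A =>
            rw [hGA _ _ _ htj] at hne
            have hm : k = m := by by_contra h; rw [if_neg h] at hne; exact hne rfl
            right; rw [← hm]; exact hA' j htj
          | B =>
            rw [hGB _ _ _ htj] at hne
            have h : k = σ m := by by_contra h; rw [if_neg h] at hne; exact hne rfl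
            have hm : m = σ k := by rw [h, hσ]
            right; rw [hm]; exact hB' j htj
          | C =>
            rw [hGC _ _ _ htj] at hne
            have hkm : k = m ∨ k = σ m := by
              by_contra hcon
              push_neg at hcon
              rw [if_neg hcon.1, if_neg hcon.2, if_neg (fun h => hcon.1 h.1)] at hne
              simp at hne
            have hm : k = m := by
              rcases hkm with h | h
              · exact h
              · have hm' : σ k = m := by rw [h, hσ]
                exact hfix.symm.trans hm'
            rw [← hm]
            by_cases hj : j = i
            · left; rw [hj, hdemt]
            · right; exact h1 j htj hj
      · obtain ⟨hCside, hor⟩ := h2 hfix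
        rcases hor with ⟨hA', hB'⟩ | ⟨hA', hB'⟩
        · refine ⟨k, ?_, ?_⟩
          · rw [hdemt, hGC _ _ _ hty, if_pos rfl, if_neg (fun h => hfix h.symm),
              if_neg (fun h => hfix h.2)]
            ring
          · intro m j hne
            cases htj : ty j with
            | A =>
              rw [hGA _ _ _ htj] at hne
              have hm : k = m := by by_contra h; rw [if_neg h] at hne; exact hne rfl
              right; rw [← hm]; exact hA' j htj
            | B =>
              rw [hGB _ _ _ htj] at hne
              have h : k = σ m := by by_contra h; rw [if_neg h] at hne; exact hne rfl
              have hm : m = σ k := by rw [h, hσ]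
              right; rw [hm]; exact hB' j htj
            | C =>
              rw [hGC _ _ _ htj] at hne
              have hkm : k = m ∨ k = σ m := by
                by_contra hcon
                push_neg at hcon
                rw [if_neg hcon.1, if_neg hcon.2, if_neg (fun h => hcon.1 h.1)] at hne
                simp at hne
              rcases hkm with h | h
              · rw [← h]
                by_cases hj : j = i
                · left; rw [hj, hdemt]
                · right; exact h1 j htj hj
              · have hm : m = σ k := by rw [h, hσ]
                right; rw [hm]; exact hCside j htj
        · refine ⟨σ k, ?_, ?_⟩
          · rw [hdemt, hGC _ _ _ hty, if_neg hfix, if_pos rfl,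
              if_neg (fun h => hfix h.1)]
            ring
          · intro m j hne
            cases htj : ty j with
            | A =>
              rw [hGA _ _ _ htj] at hne
              have hm : σ k = m := by by_contra h; rw [if_neg h] at hne; exact hne rfl
              right; rw [← hm]; exact hA' j htj
            | B =>
              rw [hGB _ _ _ htj] at hne
              have h : σ k = σ m := by by_contra h; rw [if_neg h] at hne; exact hne rfl
              have hm : k = m := σ.injective h
              right; rw [← hm]; exact hB' j htj
            | C =>
              rw [hGC _ _ _ htj] at hne
              have hkm : σ k = m ∨ σ k = σ m := by
                by_contra hcon
                push_neg at hcon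
                rw [if_neg hcon.1, if_neg hcon.2, if_neg (fun h => hcon.1 h.1)] at hne
                simp at hne
              rcases hkm with h | h
              · right; rw [← h]; exact hCside j htj
              · have hm : k = m := σ.injective h
                rw [← hm]
                by_cases hj : j = i
                · left; rw [hj, hdemt]
                · right; exact h1 j htj hj
  choose ρ hρ1 hρ2 using hρex
  -- Basic facts about the patterns.
  have hFXfalse : ∀ t p, FX t p = some false → p ≠ dem t ∧ p ∉ S t := by
    intro t p h
    rw [hFX] at h
    by_cases h1 : p = dem t
    · rw [if_pos h1] at h; exact absurd h (by simp)
    · by_cases h2 : p ∈ S t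
      · rw [if_neg h1, if_pos h2] at h; exact absurd h (by simp)
      · exact ⟨h1, h2⟩
  have hFXtrue : ∀ t p, FX t p = some true → p = dem t := by
    intro t p h
    rw [hFX] at h
    by_cases h1 : p = dem t
    · exact h1
    · by_cases h2 : p ∈ S t
      · rw [if_neg h1, if_pos h2] at h; exact absurd h (by simp)
      · rw [if_neg h1, if_neg h2] at h; exact absurd h (by simp)
  -- The fit lemmas.
  have fit1 : ∀ t (p : Fin r × Fin T),
      (FX t p = some false → GABC (ρ t) p = 0) ∧
      (FX t p = some true → GABC (ρ t) p = 1) := by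
    intro t p
    constructor
    · intro h
      obtain ⟨hp1, hp2⟩ := hFXfalse t p h
      by_contra hne
      rcases hρ2 t p.1 p.2 hne with h' | h'
      · exact hp1 h'
      · exact hp2 h'
    · intro h
      rw [hFXtrue t p h]
      exact hρ1 t
  have fitB : ∀ t (m : Fin r) (j : Fin T),
      (B t (m, j) = some false → GABC (σ (ρ t)) (m, j) = 0) ∧
      (B t (m, j) = some true → GABC (σ (ρ t)) (m, j) = 1) := by
    intro t m j
    constructor
    · intro h
      rw [hBdef] at h
      have h' : FX t (σ m, j) = some false := by
        by_cases hc : FX t (σ m, j) = some false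
        · exact hc
        · rw [if_neg hc] at h; exact absurd h (by simp)
      rw [hGsym]
      exact (fit1 t (σ m, j)).1 h'
    · intro h
      rw [hBdef] at h
      by_cases hc : FX t (σ m, j) = some false
      · rw [if_pos hc] at h; exact absurd h (by simp)
      · rw [if_neg hc] at h; exact absurd h (by simp)
  -- The decoding matrix for the extension.
  set D'0 : Matrix (Fin L ⊕ Fin L) (Fin r) 𝔽 :=
    Matrix.of (fun u s => if s = Sum.elim ρ (fun t' => σ (ρ t')) u then (1 : 𝔽) else 0)
    with hD0
  have hCG : ∀ (s : Fin r) (p : Fin r × Fin T), (C * GABC) s p = GABC (σ s) p := by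
    intro s p
    rw [Matrix.mul_apply, Finset.sum_eq_single (σ s)]
    · rw [hC, if_pos (by rw [hσ]), one_mul]
    · intro b _ hb
      rw [hC, if_neg, zero_mul]
      intro hc; apply hb; rw [hc, hσ]
    · intro h; exact absurd (Finset.mem_univ _) h
  have hent1 : ∀ u (p : Fin r × Fin T),
      (D'0 * Matrix.fromCols GABC (C * GABC)) u (Sum.inl p) =
        GABC (Sum.elim ρ (fun t' => σ (ρ t')) u) p := by
    intro u p
    rw [Matrix.mul_apply]
    simp only [hD0, Matrix.of_apply, Matrix.fromCols_apply_inl]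
    exact aux_sum_ite_mul (Sum.elim ρ (fun t' => σ (ρ t')) u) (fun s => GABC s p)
  have hent2 : ∀ u (p : Fin r × Fin T),
      (D'0 * Matrix.fromCols GABC (C * GABC)) u (Sum.inr p) =
        GABC (σ (Sum.elim ρ (fun t' => σ (ρ t')) u)) p := by
    intro u p
    rw [Matrix.mul_apply]
    simp only [hD0, Matrix.of_apply, Matrix.fromCols_apply_inr]
    rw [aux_sum_ite_mul (Sum.elim ρ (fun t' => σ (ρ t')) u) (fun s => (C * GABC) s p)]
    exact hCG _ p
  have hkey : Fits (Matrix.fromBlocks FX B B FX)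
      (D'0 * Matrix.fromCols GABC (C * GABC)) := by
    rintro (t | t) (⟨m, j⟩ | ⟨m, j⟩)
    · rw [Matrix.fromBlocks_apply₁₁, hent1]
      exact fit1 t (m, j)
    · rw [Matrix.fromBlocks_apply₁₂, hent2]
      exact fitB t m j
    · rw [Matrix.fromBlocks_apply₂₁, hent1]
      exact fitB t m j
    · rw [Matrix.fromBlocks_apply₂₂, hent2]
      simp only [Sum.elim_inr]
      rw [hσ]
      exact fit1 t (m, j)
  refine ⟨⟨D'0, hkey⟩, ?_⟩
  -- Rank invariance.
  intro hmin
  set M₀ := D'0 * Matrix.fromCols GABC (C * GABC) with hM0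
  have hr0 : M₀.rank ≤ r := by
    refine le_trans (Matrix.rank_mul_le_right _ _) ?_
    refine le_trans (Matrix.rank_le_card_height _) ?_
    simp
  have hub : minrk 𝔽 (Matrix.fromBlocks FX B B FX) ≤ r := by
    refine le_trans (Nat.sInf_le ⟨M₀, hkey, rfl⟩) hr0
  have hlb : r ≤ minrk 𝔽 (Matrix.fromBlocks FX B B FX) := by
    refine le_csInf ⟨M₀.rank, M₀, hkey, rfl⟩ ?_
    rintro n ⟨M, hM, rfl⟩
    have hsub : Fits FX (M.submatrix Sum.inl Sum.inl) := by
      intro t p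
      have := hM (Sum.inl t) (Sum.inl p)
      rwa [Matrix.fromBlocks_apply₁₁] at this
    have h1 : minrk 𝔽 FX ≤ (M.submatrix Sum.inl Sum.inl).rank :=
      Nat.sInf_le ⟨_, hsub, rfl⟩
    calc r = minrk 𝔽 FX := hmin.symm
      _ ≤ (M.submatrix Sum.inl Sum.inl).rank := h1
      _ ≤ M.rank := aux_rank_submatrix_le M
  exact le_antisymm hub hlb
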